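/- arXiv:0905.3148 — 6 statements merged into one kernel-verified Lean document; each statement's English description precedes it below -/
import Mathlib

section
/- Let 𝒯 be a pretriangulated category and let (A_•, d_•) be a complex of length n over 𝒯 such that Hom(A_i, A_j⟦m⟧) = 0 for all 0 ≤ i < j ≤ n and all integers m < 0. Then there exists a right convolution (X, r) of (A_•, d_•). -/
open CategoryTheory CategoryTheory.Limits CategoryTheory.Pretriangulated

universe v u

variable (C : Type u) [Category.{v} C] [Preadditive C] [HasZeroObject C] [HasShift C ℤ]
  [∀ n : ℤ, (shiftFunctor C n).Additive] [Pretriangulated C]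

/-- A complex of length `n` over a pretriangulated category: objects `A 0, …, A n` and
morphisms `d i : A i ⟶ A (i+1)` with `d i ≫ d (i+1) = 0` (the values of `A` and `d` beyond
`n` are irrelevant junk). -/
structure ComplexOver (n : ℕ) where
  /-- the objects of the complex -/
  A : ℕ → C
  /-- the differentials of the complex -/
  d : ∀ i : ℕ, A i ⟶ A (i + 1)
  comp_zero : ∀ i : ℕ, i + 2 ≤ n → d i ≫ d (i + 1) = 0

variable {C}

/-- The data exhibiting `(X, r)` as a right convolution of a complex `(A, d)` of length `n`:
a Postnikov system `B 0 = A 0, B 1, …, B n = X` with morphisms `u i : B i ⟶ A (i+1)`,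
`v i : A i ⟶ B i` (with `v 0 = id` and `v n = r`) and `w i : B (i+1) ⟶ (B i)⟦1⟧` such that
`v i ≫ u i = d i` and each `B i ⟶ A (i+1) ⟶ B (i+1) ⟶ (B i)⟦1⟧` is a distinguished
triangle. -/
structure RightConvolutionData {n : ℕ} (K : ComplexOver C n) (X : C) (r : K.A n ⟶ X) where
  /-- the objects of the Postnikov system -/
  B : ℕ → C
  hB0 : B 0 = K.A 0
  hBn : B n = X
  /-- the morphisms `B i ⟶ A (i+1)` -/
  u : ∀ i : ℕ, B i ⟶ K.A (i + 1)
  /-- the morphisms `A i ⟶ B i` -/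
  v : ∀ i : ℕ, K.A i ⟶ B i
  /-- the morphisms `B (i+1) ⟶ (B i)⟦1⟧` -/
  w : ∀ i : ℕ, B (i + 1) ⟶ (B i)⟦(1 : ℤ)⟧
  hv0 : v 0 = eqToHom hB0.symm
  hvn : v n = r ≫ eqToHom hBn.symm
  comm : ∀ i : ℕ, i + 1 ≤ n → v i ≫ u i = K.d i
  mem : ∀ i : ℕ, i + 1 ≤ n → Triangle.mk (u i) (v (i + 1)) (w i) ∈ distTriang C


section ConvAux

variable {n : ℕ}

open Classical in
/-- choose a lift of `d` along `v` if one exists, else `0`. -/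
noncomputable def convLift {X Y Z : C} (v : X ⟶ Y) (d : X ⟶ Z) : Y ⟶ Z :=
  if h : ∃ g : Y ⟶ Z, v ≫ g = d then h.choose else 0

lemma convLift_spec {X Y Z : C} (v : X ⟶ Y) (d : X ⟶ Z)
    (h : ∃ g : Y ⟶ Z, v ≫ g = d) : v ≫ convLift v d = d := by
  classical
  rw [convLift]
  rw [dif_pos h]
  exact h.choose_spec

/-- one step of the Postnikov construction -/
noncomputable def convStep (K : ComplexOver C n) (k : ℕ)
    (p : Σ' (B : C), K.A k ⟶ B) : Σ' (B : C), K.A (k + 1) ⟶ B :=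
  ⟨(Pretriangulated.distinguished_cocone_triangle (convLift p.2 (K.d k))).choose,
   (Pretriangulated.distinguished_cocone_triangle
      (convLift p.2 (K.d k))).choose_spec.choose⟩

/-- the Postnikov tower: objects with structure maps -/
noncomputable def convB (K : ComplexOver C n) : ∀ k : ℕ, Σ' (B : C), K.A k ⟶ B :=
  fun k => Nat.rec ⟨K.A 0, 𝟙 _⟩ (fun k p => convStep K k p) k

/-- the maps `v k : A k ⟶ B k` -/
noncomputable def convv (K : ComplexOver C n) (k : ℕ) : K.A k ⟶ (convB K k).1 :=
  (convB K k).2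

/-- the maps `u k : B k ⟶ A (k+1)` -/
noncomputable def convu (K : ComplexOver C n) (k : ℕ) : (convB K k).1 ⟶ K.A (k + 1) :=
  convLift (convB K k).2 (K.d k)

/-- the maps `w k : B (k+1) ⟶ (B k)⟦1⟧` -/
noncomputable def convw (K : ComplexOver C n) (k : ℕ) :
    (convB K (k + 1)).1 ⟶ ((convB K k).1)⟦(1 : ℤ)⟧ :=
  (Pretriangulated.distinguished_cocone_triangle
    (convu K k)).choose_spec.choose_spec.choose

lemma convmem (K : ComplexOver C n) (k : ℕ) :
    Triangle.mk (convu K k) (convv K (k + 1)) (convw K k) ∈ distTriang C :=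
  (Pretriangulated.distinguished_cocone_triangle
    (convu K k)).choose_spec.choose_spec.choose_spec

lemma shift_one_hom_zero {X Y : C} (h : X⟦(1 : ℤ)⟧ ⟶ Y)
    (H : ∀ f : X ⟶ Y⟦(-1 : ℤ)⟧, f = 0) : h = 0 := by
  have h0 : (shiftFunctorCompIsoId C (1 : ℤ) (-1) (by ring)).inv.app X ≫ h⟦(-1 : ℤ)⟧' = 0 :=
    H _
  have h2 : h⟦(-1 : ℤ)⟧' = 0 := by
    have := congrArg (fun t => (shiftFunctorCompIsoId C (1 : ℤ) (-1) (by ring)).hom.app X ≫ t) h0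
    simpa using this
  apply (shiftFunctor C (-1 : ℤ)).map_injective
  rw [h2, Functor.map_zero]

lemma hom_shift_neg_one_zero {B Y : C} (m : ℤ) (hm : m ≤ 0)
    (H : ∀ m' : ℤ, m' < 0 → ∀ f : B ⟶ Y⟦m'⟧, f = 0)
    (f : B ⟶ (Y⟦m⟧)⟦(-1 : ℤ)⟧) : f = 0 := by
  have h1 : f ≫ (shiftFunctorAdd' C m (-1) (m - 1) (by ring)).inv.app Y = 0 :=
    H (m - 1) (by omega) _
  have := congrArg (fun t => t ≫ (shiftFunctorAdd' C m (-1) (m - 1) (by ring)).hom.app Y) h1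
  simpa using this

end ConvAux

/-- Orlov's convolution existence lemma: if `(A, d)` is a complex of length `n` over a
pretriangulated category with `Hom(A i, A j⟦m⟧) = 0` for all `i < j ≤ n` and `m < 0`, then
a right convolution of `(A, d)` exists. -/
theorem exists_rightConvolution {n : ℕ} (K : ComplexOver C n)
    (hvanish : ∀ i j : ℕ, i < j → j ≤ n → ∀ m : ℤ, m < 0 →
      ∀ f : K.A i ⟶ (K.A j)⟦m⟧, f = 0) :
    ∃ (X : C) (r : K.A n ⟶ X), Nonempty (RightConvolutionData K X r) := by
  -- the vanishing property of the tower
  have vanish : ∀ k j : ℕ, k < j → j ≤ n → ∀ m : ℤ, m < 0 →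
      ∀ f : (convB K k).1 ⟶ (K.A j)⟦m⟧, f = 0 := by
    intro k
    induction k with
    | zero =>
      intro j hj hjn m hm f
      exact hvanish 0 j hj hjn m hm f
    | succ k ih =>
      intro j hj hjn m hm f
      have h1 : convv K (k + 1) ≫ f = 0 := hvanish (k + 1) j hj hjn m hm _
      obtain ⟨g, hg⟩ := Triangle.yoneda_exact₃ _ (convmem K k) f h1
      have hg0 : g = 0 := shift_one_hom_zero g
        (hom_shift_neg_one_zero m (by omega) (fun m' hm' => ih j (by omega) hjn m' hm'))
      rw [hg, hg0, comp_zero]; rfl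
  have comm : ∀ k : ℕ, k + 1 ≤ n → convv K k ≫ convu K k = K.d k := by
    intro k
    induction k with
    | zero =>
      intro _
      apply convLift_spec
      exact ⟨K.d 0, Category.id_comp _⟩
    | succ k ih =>
      intro hk1
      have hcomm_k := ih (by omega)
      have hz : convu K k ≫ K.d (k + 1) = 0 := by
        have hv : convv K k ≫ (convu K k ≫ K.d (k + 1)) = 0 := by
          rw [← Category.assoc, hcomm_k, K.comp_zero k (by omega)]
        cases k with
        | zero =>
          have hid : convv K 0 = 𝟙 (K.A 0) := rfl
          have hv := (Category.id_comp (convu K 0 ≫ K.d (0 + 1))).symm.trans hv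
          exact hv
        | succ j =>
          obtain ⟨g, hg⟩ := Triangle.yoneda_exact₃ _ (convmem K j) _ hv
          have hg0 : g = 0 := shift_one_hom_zero g
            (fun f => vanish j (j + 3) (by omega) (by omega) (-1) (by omega) f)
          rw [hg, hg0, comp_zero]; rfl
      apply convLift_spec
      obtain ⟨g, hg⟩ := Triangle.yoneda_exact₂ _ (convmem K k) (K.d (k + 1)) hz
      exact ⟨g, hg.symm⟩
  exact ⟨(convB K n).1, convv K n, ⟨{
    B := fun k => (convB K k).1
    hB0 := rfl
    hBn := rfl
    u := convu K
    v := convv K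
    w := convw K
    hv0 := by rfl
    hvn := by simp [eqToHom_refl]
    comm := comm
    mem := fun i _ => convmem K i }⟩⟩
end

section
/- Let 𝒯 be a pretriangulated category and let (A_•, d_•) and (A'_•, d'_•) be complexes of length n over 𝒯 such that Hom(A_i, A_j⟦m⟧) = 0, Hom(A'_i, A'_j⟦m⟧) = 0, and Hom(A_i, A'_j⟦m⟧) = 0 for all 0 ≤ i < j ≤ n and all integers m < 0. Let (f_i : A_i → A'_i)_{0≤i≤n} be a morphism of complexes, i.e. f_{i+1} ∘ d_i = d'_i ∘ f_i for 0 ≤ i ≤ n−1. Then for any right convolution (X, r) of (A_•, d_•), any right convolution (X', r') of (A'_•, d'_•), any object Z' of 𝒯, and any morphism h : X' → Z', there exists a morphism g : X → Z' with g ∘ r = h ∘ r' ∘ f_n. If moreover Hom(A_i, Z'⟦m⟧) = 0 for all 0 ≤ i ≤ n and all m < 0, then g is the unique morphism X → Z' satisfying g ∘ r = h ∘ r' ∘ f_n. -/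
open CategoryTheory CategoryTheory.Limits CategoryTheory.Pretriangulated

universe v u

variable (C : Type u) [Category.{v} C] [Preadditive C] [HasZeroObject C] [HasShift C ℤ]
  [∀ n : ℤ, (shiftFunctor C n).Additive] [Pretriangulated C]

variable {C}

set_option linter.unusedSectionVars false

private lemma shift_one_hom_zero_s3 {B Y : C} (hvan : ∀ φ : B ⟶ Y⟦(-1 : ℤ)⟧, φ = 0)
    (γ : B⟦(1 : ℤ)⟧ ⟶ Y) : γ = 0 := by
  obtain ⟨γ', hγ'⟩ := (shiftFunctor C (1 : ℤ)).map_surjective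
    (γ ≫ (shiftFunctorCompIsoId C (-1 : ℤ) (1 : ℤ) (by ring)).inv.app Y)
  rw [hvan γ', Functor.map_zero] at hγ'
  have h0 : γ ≫ (shiftFunctorCompIsoId C (-1 : ℤ) (1 : ℤ) (by ring)).inv.app Y = 0 := hγ'.symm
  rw [← cancel_mono ((shiftFunctorCompIsoId C (-1 : ℤ) (1 : ℤ) (by ring)).inv.app Y), zero_comp]
  exact h0

private lemma rcd_hom_vanish {n : ℕ} {K : ComplexOver C n} {X : C} {r : K.A n ⟶ X}
    (D : RightConvolutionData K X r) (Y : C) (i : ℕ) (hi : i ≤ n)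
    (hA : ∀ j, j ≤ i → ∀ m : ℤ, m < 0 → ∀ φ : K.A j ⟶ Y⟦m⟧, φ = 0) :
    ∀ m : ℤ, m < 0 → ∀ φ : D.B i ⟶ Y⟦m⟧, φ = 0 := by
  induction i with
  | zero =>
    intro m hm φ
    have h0 : eqToHom D.hB0.symm ≫ φ = 0 := hA 0 le_rfl m hm _
    calc φ = eqToHom D.hB0 ≫ (eqToHom D.hB0.symm ≫ φ) := by simp
    _ = 0 := by rw [h0, comp_zero]
  | succ i ih =>
    intro m hm φ
    have hv : (Triangle.mk (D.u i) (D.v (i + 1)) (D.w i)).mor₂ ≫ φ = 0 :=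
      hA (i + 1) le_rfl m hm _
    obtain ⟨γ, hγ⟩ := Triangle.yoneda_exact₃ _ (D.mem i hi) φ hv
    have hγ0 : γ = 0 := by
      refine shift_one_hom_zero_s3 (fun ψ => ?_) γ
      have hψ0 : ψ ≫ ((shiftFunctorAdd' C m (-1) (m - 1) (by ring)).app Y).inv = 0 :=
        ih (le_of_lt hi) (fun j hj m' hm' φ' => hA j (le_trans hj (Nat.le_succ i)) m' hm' φ')
          (m - 1) (by omega) _
      calc ψ = (ψ ≫ ((shiftFunctorAdd' C m (-1) (m - 1) (by ring)).app Y).inv) ≫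
            ((shiftFunctorAdd' C m (-1) (m - 1) (by ring)).app Y).hom := by simp
      _ = 0 := by rw [hψ0, zero_comp]
    rw [hγ, hγ0]; exact comp_zero

private lemma exists_beta {n : ℕ} {K K' : ComplexOver C n}
    (hKK' : ∀ i j : ℕ, i < j → j ≤ n → ∀ m : ℤ, m < 0 → ∀ f : K.A i ⟶ (K'.A j)⟦m⟧, f = 0)
    (f : ∀ i : ℕ, K.A i ⟶ K'.A i)
    (hf : ∀ i : ℕ, i + 1 ≤ n → K.d i ≫ f (i + 1) = f i ≫ K'.d i)
    {X : C} {r : K.A n ⟶ X} (D : RightConvolutionData K X r)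
    {X' : C} {r' : K'.A n ⟶ X'} (D' : RightConvolutionData K' X' r') :
    ∀ i : ℕ, i ≤ n → ∃ β : D.B i ⟶ D'.B i,
      D.v i ≫ β = f i ≫ D'.v i ∧ (i + 1 ≤ n → β ≫ D'.u i = D.u i ≫ f (i + 1)) := by
  intro i
  induction i with
  | zero =>
    intro _
    refine ⟨eqToHom D.hB0 ≫ f 0 ≫ eqToHom D'.hB0.symm, ?_, ?_⟩
    · rw [D.hv0, D'.hv0]; simp
    · intro h1
      have hu : D.u 0 = eqToHom D.hB0 ≫ K.d 0 := by
        have hc := D.comm 0 h1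
        rw [D.hv0] at hc
        rw [← hc]; simp
      have hu' : D'.u 0 = eqToHom D'.hB0 ≫ K'.d 0 := by
        have hc := D'.comm 0 h1
        rw [D'.hv0] at hc
        rw [← hc]; simp
      rw [hu, hu']
      simp only [Category.assoc, eqToHom_trans_assoc, eqToHom_refl, Category.id_comp]
      rw [← hf 0 h1]
  | succ i ih =>
    intro hi
    obtain ⟨β, hβ1, hβ2⟩ := ih (le_of_lt hi)
    obtain ⟨c, hc1, -⟩ := Pretriangulated.complete_distinguished_triangle_morphism
      (Triangle.mk (D.u i) (D.v (i + 1)) (D.w i))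
      (Triangle.mk (D'.u i) (D'.v (i + 1)) (D'.w i))
      (D.mem i hi) (D'.mem i hi) β (f (i + 1)) (hβ2 hi).symm
    obtain ⟨c, hc1⟩ : ∃ c' : D.B (i + 1) ⟶ D'.B (i + 1),
        D.v (i + 1) ≫ c' = f (i + 1) ≫ D'.v (i + 1) := ⟨c, hc1⟩
    refine ⟨c, hc1, fun h2 => ?_⟩
    have hδv : D.v (i + 1) ≫ ((c ≫ D'.u (i + 1) : D.B (i + 1) ⟶ K'.A (i + 2)) -
        D.u (i + 1) ≫ f (i + 2)) = 0 := by
      rw [Preadditive.comp_sub, ← Category.assoc, hc1, Category.assoc,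
        D'.comm (i + 1) h2, ← Category.assoc, D.comm (i + 1) h2, hf (i + 1) h2, sub_self]
    obtain ⟨γ, hγ⟩ := Triangle.yoneda_exact₃ _ (D.mem i hi) _ hδv
    have hγ0 : γ = 0 := by
      refine shift_one_hom_zero_s3 (fun ψ => ?_) γ
      exact rcd_hom_vanish D (K'.A (i + 2)) i (le_of_lt hi)
        (fun j hj m hm φ => hKK' j (i + 2) (by omega) h2 m hm φ) (-1) (by norm_num) ψ
    rw [hγ0, comp_zero] at hγ
    exact sub_eq_zero.mp hγ


/-- Orlov's lemma on morphisms of right convolutions: given complexes `(A, d)` and `(A', d')`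
of length `n` with the appropriate negative-degree Hom-vanishing, a morphism of complexes
`(f i)`, right convolutions `(X, r)` and `(X', r')`, and a morphism `h : X' ⟶ Z'`, there
exists `g : X ⟶ Z'` with `g ∘ r = h ∘ r' ∘ f n`; moreover `g` is unique with this property
whenever `Hom(A i, Z'⟦m⟧) = 0` for all `i ≤ n` and `m < 0`. -/
theorem exists_hom_of_rightConvolutions {n : ℕ} (K K' : ComplexOver C n)
    (hK : ∀ i j : ℕ, i < j → j ≤ n → ∀ m : ℤ, m < 0 → ∀ f : K.A i ⟶ (K.A j)⟦m⟧, f = 0)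
    (hK' : ∀ i j : ℕ, i < j → j ≤ n → ∀ m : ℤ, m < 0 → ∀ f : K'.A i ⟶ (K'.A j)⟦m⟧, f = 0)
    (hKK' : ∀ i j : ℕ, i < j → j ≤ n → ∀ m : ℤ, m < 0 → ∀ f : K.A i ⟶ (K'.A j)⟦m⟧, f = 0)
    (f : ∀ i : ℕ, K.A i ⟶ K'.A i)
    (hf : ∀ i : ℕ, i + 1 ≤ n → K.d i ≫ f (i + 1) = f i ≫ K'.d i)
    (X : C) (r : K.A n ⟶ X) (hX : Nonempty (RightConvolutionData K X r))
    (X' : C) (r' : K'.A n ⟶ X') (hX' : Nonempty (RightConvolutionData K' X' r'))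
    (Z' : C) (h : X' ⟶ Z') :
    ∃ g : X ⟶ Z', r ≫ g = f n ≫ r' ≫ h ∧
      ((∀ i : ℕ, i ≤ n → ∀ m : ℤ, m < 0 → ∀ φ : K.A i ⟶ Z'⟦m⟧, φ = 0) →
        ∀ g' : X ⟶ Z', r ≫ g' = f n ≫ r' ≫ h → g' = g) := by
  obtain ⟨D⟩ := hX
  obtain ⟨D'⟩ := hX'
  obtain ⟨β, hβ1, -⟩ := exists_beta hKK' f hf D D' n le_rfl
  set g : X ⟶ Z' := eqToHom D.hBn.symm ≫ β ≫ eqToHom D'.hBn ≫ h with hgdef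
  have hrv : r ≫ eqToHom D.hBn.symm = D.v n := D.hvn.symm
  have hg : r ≫ g = f n ≫ r' ≫ h := by
    rw [hgdef]
    calc r ≫ eqToHom D.hBn.symm ≫ β ≫ eqToHom D'.hBn ≫ h
        = (r ≫ eqToHom D.hBn.symm) ≫ β ≫ eqToHom D'.hBn ≫ h := by rw [Category.assoc]
    _ = (D.v n ≫ β) ≫ eqToHom D'.hBn ≫ h := by rw [hrv, Category.assoc]
    _ = (f n ≫ D'.v n) ≫ eqToHom D'.hBn ≫ h := by rw [hβ1]
    _ = f n ≫ r' ≫ h := by rw [D'.hvn]; simp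
  refine ⟨g, hg, fun hZ g' hg' => ?_⟩
  have hsub : D.v n ≫ eqToHom D.hBn ≫ (g' - g) = 0 := by
    have hh : D.v n ≫ eqToHom D.hBn = r := by rw [D.hvn]; simp
    rw [← Category.assoc, hh, Preadditive.comp_sub, hg, hg', sub_self]
  have key : eqToHom D.hBn ≫ (g' - g) = 0 := by
    cases n with
    | zero =>
      rw [D.hv0] at hsub
      calc eqToHom D.hBn ≫ (g' - g)
          = eqToHom D.hB0 ≫ eqToHom D.hB0.symm ≫ eqToHom D.hBn ≫ (g' - g) := by simp
      _ = 0 := by rw [hsub, comp_zero]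
    | succ k =>
      have hv : (Triangle.mk (D.u k) (D.v (k + 1)) (D.w k)).mor₂ ≫
          (eqToHom D.hBn ≫ (g' - g)) = 0 := hsub
      obtain ⟨γ, hγ⟩ := Triangle.yoneda_exact₃ _ (D.mem k le_rfl) _ hv
      have hγ0 : γ = 0 := by
        refine shift_one_hom_zero_s3 (fun ψ => ?_) γ
        exact rcd_hom_vanish D Z' k (by omega)
          (fun j hj m hm φ => hZ j (by omega) m hm φ) (-1) (by norm_num) ψ
      exact hγ.trans (by rw [hγ0]; exact comp_zero)
  have hzero : g' - g = 0 := by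
    calc g' - g = eqToHom D.hBn.symm ≫ eqToHom D.hBn ≫ (g' - g) := by simp
    _ = 0 := by rw [key, comp_zero]
  exact sub_eq_zero.mp hzero
end

section
/- Let 𝒯 be a pretriangulated category and let (A_•, d_•) be a complex of length n over 𝒯 such that Hom(A_i, A_j⟦m⟧) = 0 for all 0 ≤ i < j ≤ n and all integers m < 0. Then any two right convolutions (X, r) and (X', r') of (A_•, d_•) are isomorphic; more precisely, there is an isomorphism g : X ≅ X' with g ∘ r = r'. If moreover Hom(A_i, X⟦m⟧) = 0 for all 0 ≤ i ≤ n and all m < 0 for some (equivalently, any) right convolution X, then this isomorphism is unique, so any two right convolutions are canonically isomorphic. -/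
open CategoryTheory CategoryTheory.Limits CategoryTheory.Pretriangulated

universe v u

variable (C : Type u) [Category.{v} C] [Preadditive C] [HasZeroObject C] [HasShift C ℤ]
  [∀ n : ℤ, (shiftFunctor C n).Additive] [Pretriangulated C]

variable {C}

/-- If all maps `P ⟶ Q⟦-1⟧` vanish, then all maps `P⟦1⟧ ⟶ Q` vanish. -/
lemma shift_one_hom_zero_s4 {P Q : C} (hz : ∀ f : P ⟶ Q⟦(-1 : ℤ)⟧, f = 0)
    (g : P⟦(1 : ℤ)⟧ ⟶ Q) : g = 0 := by
  apply (shiftFunctor C (-1 : ℤ)).map_injective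
  rw [Functor.map_zero]
  have h := hz ((shiftFunctorCompIsoId C (1 : ℤ) (-1 : ℤ) (by ring)).inv.app P ≫
    (shiftFunctor C (-1 : ℤ)).map g)
  rw [← cancel_epi ((shiftFunctorCompIsoId C (1 : ℤ) (-1 : ℤ) (by ring)).inv.app P),
    comp_zero]
  exact h

/-- Vanishing propagates from the terms of the complex to the Postnikov system. -/
lemma conv_vanish {n : ℕ} {K : ComplexOver C n} {X : C} {r : K.A n ⟶ X}
    (D : RightConvolutionData K X r) (Y : C) :
    ∀ k : ℕ, k ≤ n → (∀ i : ℕ, i ≤ k → ∀ m : ℤ, m < 0 → ∀ f : K.A i ⟶ Y⟦m⟧, f = 0) →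
      ∀ m : ℤ, m < 0 → ∀ f : D.B k ⟶ Y⟦m⟧, f = 0 := by
  intro k
  induction k with
  | zero =>
    intro _ h m hm f
    have h0 := h 0 le_rfl m hm (eqToHom D.hB0.symm ≫ f)
    calc f = eqToHom D.hB0 ≫ eqToHom D.hB0.symm ≫ f := by simp
    _ = 0 := by rw [h0, comp_zero]
  | succ k ih =>
    intro hk h m hm f
    have h2 : (Triangle.mk (D.u k) (D.v (k + 1)) (D.w k)).mor₂ ≫ f = 0 :=
      h (k + 1) le_rfl m hm _
    obtain ⟨g, hg⟩ := Triangle.yoneda_exact₃ _ (D.mem k hk) f h2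
    have hz : ∀ f' : D.B k ⟶ (Y⟦m⟧)⟦(-1 : ℤ)⟧, f' = 0 := by
      intro f'
      have hih := ih (by omega) (fun i hi m' hm' f'' => h i (by omega) m' hm' f'')
        (m - 1) (by omega) (f' ≫ (shiftFunctorAdd' C m (-1) (m - 1) (by ring)).inv.app Y)
      calc f' = (f' ≫ (shiftFunctorAdd' C m (-1) (m - 1) (by ring)).inv.app Y) ≫
            (shiftFunctorAdd' C m (-1) (m - 1) (by ring)).hom.app Y := by
            rw [Category.assoc, Iso.inv_hom_id_app]; simp
      _ = 0 := by rw [hih, zero_comp]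
    have hg0 : g = 0 := shift_one_hom_zero_s4 hz g
    rw [hg, hg0, comp_zero]; rfl

/-- Compatibility with `v` implies compatibility with `u`, under the vanishing hypothesis. -/
lemma conv_u_eq {n : ℕ} {K : ComplexOver C n}
    (hvanish : ∀ i j : ℕ, i < j → j ≤ n → ∀ m : ℤ, m < 0 →
      ∀ f : K.A i ⟶ (K.A j)⟦m⟧, f = 0)
    {X : C} {r : K.A n ⟶ X} {X' : C} {r' : K.A n ⟶ X'}
    (D : RightConvolutionData K X r) (D' : RightConvolutionData K X' r')
    (k : ℕ) (hk : k + 1 ≤ n) (g : D.B k ⟶ D'.B k) (hg : D.v k ≫ g = D'.v k) :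
    g ≫ D'.u k = D.u k := by
  cases k with
  | zero =>
    have h1 := D.comm 0 hk
    have h2 := D'.comm 0 hk
    rw [D.hv0] at h1 hg
    rw [← cancel_epi (eqToHom D.hB0.symm), ← Category.assoc, hg, h2, h1]
  | succ k =>
    have hv : D.v (k + 1) ≫ (D.u (k + 1) - g ≫ D'.u (k + 1)) = 0 := by
      rw [Preadditive.comp_sub, D.comm (k + 1) hk, ← Category.assoc, hg,
        D'.comm (k + 1) hk, sub_self]
    obtain ⟨t, ht⟩ := Triangle.yoneda_exact₃ _ (D.mem k (by omega))
      (D.u (k + 1) - g ≫ D'.u (k + 1)) hv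
    have hz : ∀ f' : D.B k ⟶ (K.A (k + 1 + 1))⟦(-1 : ℤ)⟧, f' = 0 := by
      have := conv_vanish D ((K.A (k + 1 + 1))⟦(0 : ℤ)⟧) -- dummy unused
      exact fun f' => conv_vanish D (K.A (k + 1 + 1)) k (by omega)
        (fun i hi m hm f => hvanish i (k + 1 + 1) (by omega) (by omega) m hm f)
        (-1) (by omega) f'
    have ht0 : t = 0 := shift_one_hom_zero_s4 hz t
    rw [ht0, comp_zero] at ht
    rw [← sub_eq_zero]
    rw [sub_eq_zero] at ⊢
    exact (sub_eq_zero.mp ht).symm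

/-- Construction of the isomorphisms between the Postnikov systems. -/
lemma conv_iso {n : ℕ} {K : ComplexOver C n}
    (hvanish : ∀ i j : ℕ, i < j → j ≤ n → ∀ m : ℤ, m < 0 →
      ∀ f : K.A i ⟶ (K.A j)⟦m⟧, f = 0)
    {X : C} {r : K.A n ⟶ X} {X' : C} {r' : K.A n ⟶ X'}
    (D : RightConvolutionData K X r) (D' : RightConvolutionData K X' r') :
    ∀ k : ℕ, k ≤ n → ∃ g : D.B k ≅ D'.B k, D.v k ≫ g.hom = D'.v k := by
  intro k
  induction k with
  | zero =>
    intro _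
    exact ⟨eqToIso (D.hB0.trans D'.hB0.symm), by
      rw [D.hv0, D'.hv0]; simp [eqToIso.hom, eqToHom_trans]⟩
  | succ k ih =>
    intro hk
    obtain ⟨g, hg⟩ := ih (by omega)
    have hu := conv_u_eq hvanish D D' k hk g.hom hg
    obtain ⟨c, hc1, hc2⟩ := complete_distinguished_triangle_morphism _ _
      (D.mem k hk) (D'.mem k hk) g.hom (𝟙 _)
      (by exact (Category.comp_id _).trans hu.symm)
    have hiso : IsIso c := by
      refine isIso₃_of_isIso₁₂
        (Triangle.homMk (Triangle.mk (D.u k) (D.v (k + 1)) (D.w k))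
          (Triangle.mk (D'.u k) (D'.v (k + 1)) (D'.w k)) g.hom (𝟙 _) c ?_ ?_ ?_)
        (D.mem k hk) (D'.mem k hk) ?_ ?_
      · exact (Category.comp_id _).trans hu.symm
      · exact hc1
      · exact hc2
      · exact (inferInstance : IsIso g.hom)
      · exact (inferInstance : IsIso (𝟙 (K.A (k + 1))))
    exact ⟨@asIso _ _ _ _ c hiso, hc1.trans (Category.id_comp _)⟩

/-- Uniqueness of right convolutions: if `(A, d)` is a complex of length `n` over a
pretriangulated category with `Hom(A i, A j⟦m⟧) = 0` for `i < j ≤ n`, `m < 0`, then any two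
right convolutions `(X, r)` and `(X', r')` are isomorphic via an isomorphism `g` with
`g ∘ r = r'`; moreover this isomorphism is unique (canonical) whenever
`Hom(A i, X⟦m⟧) = 0` for all `i ≤ n` and `m < 0`. -/
theorem rightConvolution_unique {n : ℕ} (K : ComplexOver C n)
    (hvanish : ∀ i j : ℕ, i < j → j ≤ n → ∀ m : ℤ, m < 0 →
      ∀ f : K.A i ⟶ (K.A j)⟦m⟧, f = 0)
    (X : C) (r : K.A n ⟶ X) (hX : Nonempty (RightConvolutionData K X r))
    (X' : C) (r' : K.A n ⟶ X') (hX' : Nonempty (RightConvolutionData K X' r')) :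
    ∃ g : X ≅ X', r ≫ g.hom = r' ∧
      ((∀ i : ℕ, i ≤ n → ∀ m : ℤ, m < 0 → ∀ φ : K.A i ⟶ X⟦m⟧, φ = 0) →
        ∀ g' : X ⟶ X', r ≫ g' = r' → g' = g.hom) := by
  obtain ⟨D⟩ := hX
  obtain ⟨D'⟩ := hX'
  obtain ⟨gn, hgn⟩ := conv_iso hvanish D D' n le_rfl
  have hgn' : r ≫ eqToHom D.hBn.symm ≫ gn.hom ≫ eqToHom D'.hBn = r' := by
    rw [D.hvn, D'.hvn] at hgn
    rw [← cancel_mono (eqToHom D'.hBn.symm)]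
    simpa using hgn
  refine ⟨eqToIso D.hBn.symm ≪≫ gn ≪≫ eqToIso D'.hBn, ?_, ?_⟩
  · simpa using hgn'
  · intro hvX g' hg'
    have key : ∀ f : X ⟶ X', r ≫ f = 0 → f = 0 := by
      cases n with
      | zero =>
        intro f hf
        have h := D.hvn.symm.trans D.hv0
        have hr : r = eqToHom D.hB0.symm ≫ eqToHom D.hBn := by
          rw [← h]; simp
        have hf2 : eqToHom (D.hB0.symm.trans D.hBn) ≫ f = 0 := by
          rw [hr] at hf; simpa using hf
        calc f = eqToHom (D.hB0.symm.trans D.hBn).symm ≫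
              (eqToHom (D.hB0.symm.trans D.hBn) ≫ f) := by simp
        _ = 0 := by rw [hf2, comp_zero]
      | succ k =>
        intro f hf
        have hf' : (Triangle.mk (D.u k) (D.v (k + 1)) (D.w k)).mor₂ ≫
            (eqToHom D.hBn ≫ f) = 0 := by
          show D.v (k + 1) ≫ (eqToHom D.hBn ≫ f) = 0
          rw [D.hvn]
          simpa using hf
        obtain ⟨t, ht⟩ := Triangle.yoneda_exact₃ _ (D.mem k le_rfl) (eqToHom D.hBn ≫ f) hf'
        have hvX' : ∀ i : ℕ, i ≤ k → ∀ m : ℤ, m < 0 → ∀ φ : K.A i ⟶ X'⟦m⟧, φ = 0 := by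
          intro i hi m hm φ
          have h0 := hvX i (by omega) m hm
            (φ ≫ (shiftFunctor C m).map (eqToIso D.hBn.symm ≪≫ gn ≪≫ eqToIso D'.hBn).inv)
          calc φ = (φ ≫ (shiftFunctor C m).map
                (eqToIso D.hBn.symm ≪≫ gn ≪≫ eqToIso D'.hBn).inv) ≫
                (shiftFunctor C m).map (eqToIso D.hBn.symm ≪≫ gn ≪≫ eqToIso D'.hBn).hom := by
                rw [Category.assoc, ← CategoryTheory.Functor.map_comp, Iso.inv_hom_id,
                  CategoryTheory.Functor.map_id, Category.comp_id]
          _ = 0 := by rw [h0, zero_comp]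
        have hz : ∀ f' : D.B k ⟶ X'⟦(-1 : ℤ)⟧, f' = 0 :=
          conv_vanish D X' k (by omega) hvX' (-1) (by omega)
        have ht0 : t = 0 := shift_one_hom_zero_s4 hz t
        rw [ht0, comp_zero] at ht
        calc f = eqToHom D.hBn.symm ≫ (eqToHom D.hBn ≫ f) := by simp
        _ = 0 := by have ht' : eqToHom D.hBn ≫ f = 0 := ht; rw [ht', comp_zero]
    have hsub : r ≫ (g' - (eqToIso D.hBn.symm ≪≫ gn ≪≫ eqToIso D'.hBn).hom) = 0 := by
      rw [Preadditive.comp_sub, hg']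
      have : r ≫ (eqToIso D.hBn.symm ≪≫ gn ≪≫ eqToIso D'.hBn).hom = r' := by
        simpa using hgn'
      rw [this, sub_self]
    have := key _ hsub
    rw [sub_eq_zero] at this
    exact this
end

section
/- Let 𝒯 be a pretriangulated category and let (A_•, d_•) be a complex of length n over 𝒯 such that Hom(A_i, A_j⟦m⟧) = 0 for all 0 ≤ i < j ≤ n and all integers m < 0. Then there exists a left convolution (Y, l) of (A_•, d_•), and any two left convolutions are isomorphic via an isomorphism commuting with the structure morphisms l. If moreover Hom(Y, A_j⟦m⟧) = 0 for all 0 ≤ j ≤ n and all m < 0 for some (equivalently, any) left convolution Y, then this isomorphism is unique, so the left convolution is unique up to a unique isomorphism. -/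
open CategoryTheory CategoryTheory.Limits CategoryTheory.Pretriangulated

universe v u

variable (C : Type u) [Category.{v} C] [Preadditive C] [HasZeroObject C] [HasShift C ℤ]
  [∀ n : ℤ, (shiftFunctor C n).Additive] [Pretriangulated C]

variable {C}

/-- The data exhibiting `(Y, l)` as a left convolution of a complex `(A, d)` of length `n`:
a Postnikov system `B 0 = Y, B 1, …, B n = A n` with morphisms `t i : B i ⟶ A i`
(with `t 0 = l` and `t n = id`), `s i : A i ⟶ B (i+1)` and `w i : B (i+1) ⟶ (B i)⟦1⟧` such
that `s i ≫ t (i+1) = d i` and each `B i ⟶ A i ⟶ B (i+1) ⟶ (B i)⟦1⟧` is a distinguished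
triangle. -/
structure LeftConvolutionData {n : ℕ} (K : ComplexOver C n) (Y : C) (l : Y ⟶ K.A 0) where
  /-- the objects of the Postnikov system -/
  B : ℕ → C
  hB0 : B 0 = Y
  hBn : B n = K.A n
  /-- the morphisms `B i ⟶ A i` -/
  t : ∀ i : ℕ, B i ⟶ K.A i
  /-- the morphisms `A i ⟶ B (i+1)` -/
  s : ∀ i : ℕ, K.A i ⟶ B (i + 1)
  /-- the morphisms `B (i+1) ⟶ (B i)⟦1⟧` -/
  w : ∀ i : ℕ, B (i + 1) ⟶ (B i)⟦(1 : ℤ)⟧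
  ht0 : t 0 = eqToHom hB0 ≫ l
  htn : t n = eqToHom hBn
  comm : ∀ i : ℕ, i + 1 ≤ n → s i ≫ t (i + 1) = K.d i
  mem : ∀ i : ℕ, i + 1 ≤ n → Triangle.mk (t i) (s i) (w i) ∈ distTriang C

section Aux

variable {C : Type u} [Category.{v} C] [Preadditive C] [HasZeroObject C] [HasShift C ℤ]
  [∀ n : ℤ, (shiftFunctor C n).Additive] [Pretriangulated C]

/-- Dropping the first object of a complex. -/
def ComplexOver.drop {n : ℕ} (K : ComplexOver C (n + 1)) : ComplexOver C n where
  A i := K.A (i + 1)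
  d i := K.d (i + 1)
  comp_zero i h := K.comp_zero (i + 1) (by omega)

lemma LeftConvolutionData.vanish_B {n : ℕ} {K : ComplexOver C n} {Y : C} {l : Y ⟶ K.A 0}
    (D : LeftConvolutionData K Y l) (X : C) :
    ∀ (k j : ℕ), j + k = n →
      (∀ j', j ≤ j' → j' ≤ n → ∀ m : ℤ, m < 0 → ∀ φ : X ⟶ (K.A j')⟦m⟧, φ = 0) →
      ∀ m : ℤ, m < 0 → ∀ φ : X ⟶ (D.B j)⟦m⟧, φ = 0 := by
  intro k
  induction k with
  | zero =>
    intro j hj hX m hm φ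
    obtain rfl : j = n := by omega
    have e : (D.B j)⟦m⟧ = (K.A j)⟦m⟧ := by rw [D.hBn]
    have h0 := hX j le_rfl le_rfl m hm (φ ≫ eqToHom e)
    calc φ = (φ ≫ eqToHom e) ≫ eqToHom e.symm := by simp
    _ = 0 := by rw [h0, zero_comp]
  | succ k ih =>
    intro j hj hX m hm φ
    have h1 : j + 1 ≤ n := by omega
    have hTs : (Triangle.shiftFunctor C m).obj (Triangle.mk (D.t j) (D.s j) (D.w j))
        ∈ distTriang C :=
      Pretriangulated.Triangle.shift_distinguished _ (D.mem j h1) m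
    obtain ⟨g, hg⟩ := Triangle.coyoneda_exact₂ _ (inv_rot_of_distTriang _ hTs) φ
      (hX j le_rfl (by omega) m hm _)
    have hg0 : g = 0 := by
      have e : ((D.B (j + 1))⟦m⟧)⟦(-1 : ℤ)⟧ = ((D.B (j + 1))⟦m⟧)⟦(-1 : ℤ)⟧ := rfl
      have hiso := (shiftFunctorAdd' C m (-1) (m - 1) (by omega)).app (D.B (j + 1))
      -- hiso : (D.B (j+1))⟦m-1⟧ ≅ ((D.B (j+1))⟦m⟧)⟦-1⟧
      have h2 : g ≫ hiso.inv = 0 :=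
        ih (j + 1) (by omega) (fun j' h1' h2' => hX j' (by omega) h2') (m - 1) (by omega) _
      have h3 : (g ≫ hiso.inv) ≫ hiso.hom = 0 := by rw [h2, zero_comp]
      exact (Category.comp_id g).symm.trans ((congrArg (fun x => g ≫ x) hiso.inv_hom_id).symm.trans
        ((Category.assoc g hiso.inv hiso.hom).symm.trans h3))
    rw [hg, hg0]; exact zero_comp

lemma LeftConvolutionData.lift {n : ℕ} {K : ComplexOver C n} {Y : C} {l : Y ⟶ K.A 0}
    (D : LeftConvolutionData K Y l) (X : C)
    (hX : ∀ j, j ≤ n → ∀ m : ℤ, m < 0 → ∀ φ : X ⟶ (K.A j)⟦m⟧, φ = 0)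
    (f : X ⟶ K.A 0) (hf : 1 ≤ n → f ≫ K.d 0 = 0) :
    ∃ g : X ⟶ D.B 0, g ≫ D.t 0 = f := by
  rcases Nat.eq_zero_or_pos n with hn | hn
  · subst hn
    have : IsIso (D.t 0) := by rw [D.htn]; infer_instance
    exact ⟨f ≫ inv (D.t 0), by simp⟩
  · have hzero : f ≫ D.s 0 = 0 := by
      have h₁ : (f ≫ D.s 0) ≫ D.t 1 = 0 := by
        rw [Category.assoc, D.comm 0 (by omega), hf (by omega)]
      by_cases h2 : 2 ≤ n
      · obtain ⟨g, hg⟩ := Triangle.coyoneda_exact₂ _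
          (inv_rot_of_distTriang _ (D.mem 1 h2)) (f ≫ D.s 0) h₁
        have hg0 : g = 0 := D.vanish_B X (n - 2) 2 (by omega)
          (fun j' hj1 hj2 m hm φ => hX j' hj2 m hm φ) (-1) (by omega) g
        exact hg.trans (by rw [hg0]; exact zero_comp)
      · have hn1 : (1 : ℕ) = n := by omega
        have : IsIso (D.t 1) := by
          have := D.htn
          subst hn1
          rw [this]; infer_instance
        exact (cancel_mono (D.t 1)).mp (by rw [h₁, zero_comp])
    obtain ⟨g, hg⟩ := Triangle.coyoneda_exact₂ _ (D.mem 0 (by omega)) f hzero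
    exact ⟨g, hg.symm⟩

lemma exists_conv_data : ∀ (n : ℕ) (K : ComplexOver C n),
    (∀ i j : ℕ, i < j → j ≤ n → ∀ m : ℤ, m < 0 → ∀ f : K.A i ⟶ (K.A j)⟦m⟧, f = 0) →
    ∃ (Y : C) (l : Y ⟶ K.A 0), Nonempty (LeftConvolutionData K Y l) := by
  intro n
  induction n with
  | zero =>
    intro K _
    exact ⟨K.A 0, 𝟙 _,
      ⟨{ B := K.A, hB0 := rfl, hBn := rfl, t := fun _ => 𝟙 _, s := fun _ => 0,
         w := fun _ => 0, ht0 := by simp, htn := by simp,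
         comm := fun i hi => by omega, mem := fun i hi => by omega }⟩⟩
  | succ n ih =>
    intro K hv
    obtain ⟨Y₁, l₁, ⟨D₁⟩⟩ := ih K.drop
      (fun i j hij hj m hm f => hv (i + 1) (j + 1) (by omega) (by omega) m hm f)
    obtain ⟨g, hg⟩ := D₁.lift (K.A 0)
      (fun j hj m hm φ => hv 0 (j + 1) (by omega) (by omega) m hm φ)
      (K.d 0) (fun h1 => K.comp_zero 0 (by omega))
    obtain ⟨Z, f, w₀, hT⟩ := distinguished_cocone_triangle₁ g
    refine ⟨Z, f, ⟨{
      B := fun i => match i with | 0 => Z | (i + 1) => D₁.B i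
      hB0 := rfl
      hBn := D₁.hBn
      t := fun i => match i with | 0 => f | (i + 1) => D₁.t i
      s := fun i => match i with | 0 => g | (i + 1) => D₁.s i
      w := fun i => match i with | 0 => w₀ | (i + 1) => D₁.w i
      ht0 := by simp
      htn := D₁.htn
      comm := fun i hi => by
        cases i with
        | zero => exact hg
        | succ i => exact D₁.comm i (by omega)
      mem := fun i hi => by
        cases i with
        | zero => exact hT
        | succ i => exact D₁.mem i (by omega) }⟩⟩

lemma exists_conv_iso {n : ℕ} {K : ComplexOver C n}
    (hv : ∀ i j : ℕ, i < j → j ≤ n → ∀ m : ℤ, m < 0 → ∀ f : K.A i ⟶ (K.A j)⟦m⟧, f = 0)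
    {Y : C} {l : Y ⟶ K.A 0} {Y' : C} {l' : Y' ⟶ K.A 0}
    (D : LeftConvolutionData K Y l) (D' : LeftConvolutionData K Y' l') :
    ∀ (k j : ℕ), j + k = n → ∃ f : D.B j ⟶ D'.B j, IsIso f ∧ f ≫ D'.t j = D.t j := by
  intro k
  induction k with
  | zero =>
    intro j hj
    obtain rfl : j = n := by omega
    refine ⟨eqToHom (D.hBn.trans D'.hBn.symm), inferInstance, ?_⟩
    rw [D.htn, D'.htn, eqToHom_trans]
  | succ k ih =>
    intro j hj
    obtain ⟨f₁, hiso, hcomp⟩ := ih (j + 1) (by omega)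
    have h1 : j + 1 ≤ n := by omega
    have hs : D.s j ≫ f₁ = D'.s j := by
      have hδ : (D.s j ≫ f₁ - D'.s j) ≫ D'.t (j + 1) = 0 := by
        rw [Preadditive.sub_comp, Category.assoc, hcomp, D.comm j h1, D'.comm j h1, sub_self]
      have hδ0 : D.s j ≫ f₁ - D'.s j = 0 := by
        by_cases h2 : j + 2 ≤ n
        · obtain ⟨g, hg⟩ := Triangle.coyoneda_exact₂ _
            (inv_rot_of_distTriang _ (D'.mem (j + 1) h2)) _ hδ
          have hg0 : g = 0 := D'.vanish_B (K.A j) (n - (j + 2)) (j + 2) (by omega)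
            (fun j' hj1 hj2 m hm φ => hv j j' (by omega) hj2 m hm φ) (-1) (by omega) g
          rw [hg, hg0]; exact zero_comp
        · have hjn : j + 1 = n := by omega
          have : IsIso (D'.t (j + 1)) := by
            have := D'.htn
            subst hjn
            rw [this]; infer_instance
          exact (cancel_mono (D'.t (j + 1))).mp (by rw [hδ, zero_comp])
      rw [← sub_eq_zero]; exact hδ0
    obtain ⟨a, ha₁, ha₂⟩ := complete_distinguished_triangle_morphism₁ _ _
      (D.mem j h1) (D'.mem j h1) (𝟙 _) f₁ (hs.trans (Category.id_comp _).symm)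
    refine ⟨a, ?_, ha₁.symm.trans (Category.comp_id _)⟩
    have := isIso₁_of_isIso₂₃
      (T := Triangle.mk (D.t j) (D.s j) (D.w j))
      (T' := Triangle.mk (D'.t j) (D'.s j) (D'.w j))
      { hom₁ := a, hom₂ := 𝟙 _, hom₃ := f₁,
        comm₁ := ha₁, comm₂ := hs.trans (Category.id_comp _).symm, comm₃ := ha₂ }
      (D.mem j h1) (D'.mem j h1) (IsIso.id _) hiso
    exact this

end Aux

/-- Existence and uniqueness of left convolutions: if `(A, d)` is a complex of length `n`
over a pretriangulated category with `Hom(A i, A j⟦m⟧) = 0` for `i < j ≤ n`, `m < 0`, then a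
left convolution `(Y, l)` exists, any two left convolutions are isomorphic via an isomorphism
commuting with the structure morphisms, and this isomorphism is unique whenever
`Hom(Y, A j⟦m⟧) = 0` for all `j ≤ n` and `m < 0`. -/
theorem leftConvolution_exists_unique {n : ℕ} (K : ComplexOver C n)
    (hvanish : ∀ i j : ℕ, i < j → j ≤ n → ∀ m : ℤ, m < 0 →
      ∀ f : K.A i ⟶ (K.A j)⟦m⟧, f = 0) :
    (∃ (Y : C) (l : Y ⟶ K.A 0), Nonempty (LeftConvolutionData K Y l)) ∧
    (∀ (Y : C) (l : Y ⟶ K.A 0) (Y' : C) (l' : Y' ⟶ K.A 0),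
      Nonempty (LeftConvolutionData K Y l) → Nonempty (LeftConvolutionData K Y' l') →
      ∃ e : Y ≅ Y', e.hom ≫ l' = l ∧
        ((∀ j : ℕ, j ≤ n → ∀ m : ℤ, m < 0 → ∀ φ : Y ⟶ (K.A j)⟦m⟧, φ = 0) →
          ∀ e' : Y ⟶ Y', e' ≫ l' = l → e' = e.hom)) := by
  constructor
  · exact exists_conv_data n K hvanish
  · rintro Y l Y' l' ⟨D⟩ ⟨D'⟩
    obtain ⟨f₀, hiso, hcomp⟩ := exists_conv_iso hvanish D D' n 0 (by omega)
    haveI := hiso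
    have h' := hcomp
    rw [D.ht0, D'.ht0] at h'
    have hel : (eqToHom D.hB0.symm ≫ f₀ ≫ eqToHom D'.hB0) ≫ l' = l := by
      rw [Category.assoc, Category.assoc, h', eqToHom_trans_assoc]
      simp
    refine ⟨(eqToIso D.hB0).symm ≪≫ asIso f₀ ≪≫ eqToIso D'.hB0, hel, ?_⟩
    intro hY e' he'
    set e : Y ⟶ Y' := eqToHom D.hB0.symm ≫ f₀ ≫ eqToHom D'.hB0 with he
    show e' = e
    have hδt : ((e' - e) ≫ eqToHom D'.hB0.symm) ≫ D'.t 0 = 0 := by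
      rw [Category.assoc, D'.ht0, eqToHom_trans_assoc, eqToHom_refl, Category.id_comp,
        Preadditive.sub_comp, he', hel, sub_self]
    have hδ : (e' - e) ≫ eqToHom D'.hB0.symm = 0 := by
      rcases Nat.eq_zero_or_pos n with hn | hn
      · have : IsIso (D'.t 0) := by
          have h := D'.htn
          subst hn
          rw [h]; infer_instance
        exact (cancel_mono (D'.t 0)).mp (by rw [hδt, zero_comp])
      · obtain ⟨g, hg⟩ := Triangle.coyoneda_exact₂ _
          (inv_rot_of_distTriang _ (D'.mem 0 (by omega))) _ hδt
        have hg0 : g = 0 := D'.vanish_B Y (n - 1) 1 (by omega)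
          (fun j' hj1 hj2 m hm φ => hY j' hj2 m hm φ) (-1) (by omega) g
        rw [hg, hg0]; exact zero_comp
    have hsub : e' - e = 0 := by
      calc e' - e = ((e' - e) ≫ eqToHom D'.hB0.symm) ≫ eqToHom D'.hB0 := by simp
      _ = 0 := by rw [hδ, zero_comp]
    rw [← sub_eq_zero]
    exact hsub
end

section
/- Let 𝒯 be a pretriangulated category and let (A_•, d_•) and (A'_•, d'_•) be complexes of length n over 𝒯 such that Hom(A_i, A_j⟦m⟧) = 0, Hom(A'_i, A'_j⟦m⟧) = 0, and Hom(A_i, A'_j⟦m⟧) = 0 for all 0 ≤ i < j ≤ n and all integers m < 0. Let (f_i : A_i → A'_i)_{0≤i≤n} be a morphism of complexes, i.e. f_{i+1} ∘ d_i = d'_i ∘ f_i for 0 ≤ i ≤ n−1. Then for any left convolution (Y, l) of (A_•, d_•), any left convolution (Y', l') of (A'_•, d'_•), any object Z of 𝒯, and any morphism h : Z → Y, there exists a morphism g : Z → Y' with l' ∘ g = f_0 ∘ l ∘ h. If moreover Hom(Z, A'_j⟦m⟧) = 0 for all 0 ≤ j ≤ n and all m < 0, then g is the unique morphism Z → Y'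 satisfying l' ∘ g = f_0 ∘ l ∘ h. -/
open CategoryTheory CategoryTheory.Limits CategoryTheory.Pretriangulated

universe v u

variable (C : Type u) [Category.{v} C] [Preadditive C] [HasZeroObject C] [HasShift C ℤ]
  [∀ n : ℤ, (shiftFunctor C n).Additive] [Pretriangulated C]

variable {C}

namespace OrlovConvolutionAux

lemma vanish_B {n : ℕ} {K' : ComplexOver C n} {Y' : C} {l' : Y' ⟶ K'.A 0}
    (D' : LeftConvolutionData K' Y' l') (W : C) :
    ∀ (k j : ℕ), j + k = n →
      (∀ j' : ℕ, j ≤ j' → j' ≤ n → ∀ m : ℤ, m < 0 → ∀ φ : W ⟶ (K'.A j')⟦m⟧, φ = 0) →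
      ∀ m : ℤ, m < 0 → ∀ φ : W ⟶ (D'.B j)⟦m⟧, φ = 0 := by
  intro k
  induction k with
  | zero =>
    intro j hj hvan m hm φ
    have hjn : j = n := by omega
    subst hjn
    have e : (D'.B j)⟦m⟧ = (K'.A j)⟦m⟧ := by rw [D'.hBn]
    have h0 : φ ≫ eqToHom e = 0 := hvan j le_rfl le_rfl m hm _
    calc φ = (φ ≫ eqToHom e) ≫ eqToHom e.symm := by simp
      _ = 0 := by rw [h0, zero_comp]
  | succ k ih =>
    intro j hj hvan m hm φ
    have hT := D'.mem j (by omega)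
    have hTs := Triangle.shift_distinguished _ hT m
    set Ts := (Triangle.shiftFunctor C m).obj (Triangle.mk (D'.t j) (D'.s j) (D'.w j)) with hTsdef
    have h1 : φ ≫ Ts.invRotate.mor₂ = 0 := by
      have h2 : φ ≫ (D'.t j)⟦m⟧' = 0 := hvan j le_rfl (by omega) m hm _
      show φ ≫ Ts.mor₁ = 0
      dsimp [Ts, Triangle.shiftFunctor]
      simp only [Triangle.mk_mor₁, Units.smul_def]
      erw [Preadditive.comp_zsmul, h2]
      exact smul_zero (m.negOnePow : ℤ)
    obtain ⟨ψ, hψ⟩ := Triangle.coyoneda_exact₂ _ (inv_rot_of_distTriang _ hTs) φ h1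
    have e := (shiftFunctorAdd' C m (-1) (m-1) (by omega)).app (D'.B (j+1))
    have hψ0 : ψ = 0 := by
      have h0 : ψ ≫ e.inv = 0 :=
        ih (j+1) (by omega) (fun j' h1' h2' => hvan j' (by omega) h2') (m-1) (by omega) _
      have h3 : ψ = (ψ ≫ e.inv) ≫ e.hom := by erw [Category.assoc, e.inv_hom_id, Category.comp_id]
      rw [h3, h0, zero_comp]; rfl
    rw [hψ, hψ0, zero_comp]; rfl

lemma glift {n : ℕ} {K K' : ComplexOver C n}
    (hKK' : ∀ i j : ℕ, i < j → j ≤ n → ∀ m : ℤ, m < 0 → ∀ f : K.A i ⟶ (K'.A j)⟦m⟧, f = 0)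
    (f : ∀ i : ℕ, K.A i ⟶ K'.A i)
    (hf : ∀ i : ℕ, i + 1 ≤ n → K.d i ≫ f (i + 1) = f i ≫ K'.d i)
    {Y : C} {l : Y ⟶ K.A 0} (D : LeftConvolutionData K Y l)
    {Y' : C} {l' : Y' ⟶ K'.A 0} (D' : LeftConvolutionData K' Y' l') :
    ∀ (k i : ℕ), i + k = n → ∃ g : D.B i ⟶ D'.B i, g ≫ D'.t i = D.t i ≫ f i := by
  intro k
  induction k with
  | zero =>
    intro i hi
    have hin : i = n := by omega
    subst hin
    exact ⟨eqToHom D.hBn ≫ f i ≫ eqToHom D'.hBn.symm, by simp [D.htn, D'.htn]⟩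
  | succ k ih =>
    intro i hi
    obtain ⟨g1, hg1⟩ := ih (i+1) (by omega)
    have hδ : D.s i ≫ g1 = f i ≫ D'.s i := by
      have hδt : (D.s i ≫ g1 - f i ≫ D'.s i) ≫ D'.t (i+1) = 0 := by
        rw [Preadditive.sub_comp, Category.assoc, Category.assoc, hg1, ← Category.assoc,
          D.comm i (by omega), hf i (by omega), D'.comm i (by omega), sub_self]
      rw [← sub_eq_zero]
      rcases Nat.eq_zero_or_pos k with hk | hk
      · subst hk
        have hn : i + 1 = n := by omega
        subst hn
        have : IsIso (D'.t (i+1)) := by rw [D'.htn]; infer_instance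
        rw [← cancel_mono (D'.t (i+1)), zero_comp]
        exact hδt
      · obtain ⟨ψ, hψ⟩ := Triangle.coyoneda_exact₂ _
          (inv_rot_of_distTriang _ (D'.mem (i+1) (by omega))) _ hδt
        have hψ0 : ψ = 0 := vanish_B D' (K.A i) (n - (i+2)) (i+2) (by omega)
          (fun j' h1 h2 m hm φ => hKK' i j' (by omega) h2 m hm φ) (-1) (by omega) ψ
        rw [hψ, hψ0, zero_comp]; rfl
    obtain ⟨a, ha₁, ha₂⟩ := complete_distinguished_triangle_morphism₁
      (Triangle.mk (D.t i) (D.s i) (D.w i)) (Triangle.mk (D'.t i) (D'.s i) (D'.w i))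
      (D.mem i (by omega)) (D'.mem i (by omega)) (f i) g1 hδ
    exact ⟨a, ha₁.symm⟩

end OrlovConvolutionAux

open OrlovConvolutionAux in
/-- Orlov's lemma on morphisms of left convolutions: given complexes `(A, d)` and `(A', d')`
of length `n` with the appropriate negative-degree Hom-vanishing, a morphism of complexes
`(f i)`, left convolutions `(Y, l)` and `(Y', l')`, and a morphism `h : Z ⟶ Y`, there exists
`g : Z ⟶ Y'` with `l' ∘ g = f 0 ∘ l ∘ h`; moreover `g` is unique with this property whenever
`Hom(Z, A' j⟦m⟧) = 0` for all `j ≤ n` and `m < 0`. -/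
theorem exists_hom_of_leftConvolutions {n : ℕ} (K K' : ComplexOver C n)
    (hK : ∀ i j : ℕ, i < j → j ≤ n → ∀ m : ℤ, m < 0 → ∀ f : K.A i ⟶ (K.A j)⟦m⟧, f = 0)
    (hK' : ∀ i j : ℕ, i < j → j ≤ n → ∀ m : ℤ, m < 0 → ∀ f : K'.A i ⟶ (K'.A j)⟦m⟧, f = 0)
    (hKK' : ∀ i j : ℕ, i < j → j ≤ n → ∀ m : ℤ, m < 0 → ∀ f : K.A i ⟶ (K'.A j)⟦m⟧, f = 0)
    (f : ∀ i : ℕ, K.A i ⟶ K'.A i)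
    (hf : ∀ i : ℕ, i + 1 ≤ n → K.d i ≫ f (i + 1) = f i ≫ K'.d i)
    (Y : C) (l : Y ⟶ K.A 0) (hY : Nonempty (LeftConvolutionData K Y l))
    (Y' : C) (l' : Y' ⟶ K'.A 0) (hY' : Nonempty (LeftConvolutionData K' Y' l'))
    (Z : C) (h : Z ⟶ Y) :
    ∃ g : Z ⟶ Y', g ≫ l' = h ≫ l ≫ f 0 ∧
      ((∀ j : ℕ, j ≤ n → ∀ m : ℤ, m < 0 → ∀ φ : Z ⟶ (K'.A j)⟦m⟧, φ = 0) →
        ∀ g' : Z ⟶ Y', g' ≫ l' = h ≫ l ≫ f 0 → g' = g) := by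
  obtain ⟨D⟩ := hY
  obtain ⟨D'⟩ := hY'
  obtain ⟨g0, hg0⟩ := glift hKK' f hf D D' n 0 (by omega)
  have e1 : eqToHom D'.hB0 ≫ l' = D'.t 0 := D'.ht0.symm
  have e2 : eqToHom D.hB0.symm ≫ D.t 0 = l := by
    rw [D.ht0, ← Category.assoc, eqToHom_trans, eqToHom_refl, Category.id_comp]
  have key : (h ≫ eqToHom D.hB0.symm ≫ g0 ≫ eqToHom D'.hB0) ≫ l' = h ≫ l ≫ f 0 := by
    simp only [Category.assoc, e1]
    rw [hg0, ← Category.assoc (eqToHom D.hB0.symm), e2]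
  refine ⟨_, key, ?_⟩
  intro hZ g' hg'
  set g := h ≫ eqToHom D.hB0.symm ≫ g0 ≫ eqToHom D'.hB0 with hgdef
  set δ := (g' - g) ≫ eqToHom D'.hB0.symm with hδdef
  have hδt : δ ≫ D'.t 0 = 0 := by
    rw [hδdef, Category.assoc, D'.ht0, ← Category.assoc (eqToHom D'.hB0.symm), eqToHom_trans,
      eqToHom_refl, Category.id_comp, Preadditive.sub_comp, hg', key, sub_self]
  have hδ0 : δ = 0 := by
    rcases Nat.eq_zero_or_pos n with hn | hn
    · subst hn
      have : IsIso (D'.t 0) := by rw [D'.htn]; infer_instance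
      rw [← cancel_mono (D'.t 0), zero_comp]
      exact hδt
    · obtain ⟨ψ, hψ⟩ := Triangle.coyoneda_exact₂ _
        (inv_rot_of_distTriang _ (D'.mem 0 (by omega))) _ hδt
      have hψ0 : ψ = 0 := vanish_B D' Z (n - 1) 1 (by omega)
        (fun j' h1 h2 m hm φ => hZ j' h2 m hm φ) (-1) (by omega) ψ
      rw [hψ, hψ0, zero_comp]; rfl
  have : g' - g = δ ≫ eqToHom D'.hB0 := by
    rw [hδdef, Category.assoc, eqToHom_trans, eqToHom_refl, Category.comp_id]
  rw [← sub_eq_zero, this, hδ0, zero_comp]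
end

section
/- Let 𝒯 and 𝒮 be pretriangulated categories and let F : 𝒯 → 𝒮 be an exact functor admitting both a left adjoint and a right adjoint. Let (S_i)_{i∈I} be a spanning class for 𝒯. If for all i, j ∈ I and all k ∈ ℤ the map Hom(S_i, S_j⟦k⟧) → Hom(F(S_i), F(S_j)⟦k⟧) induced by F (using the isomorphism F(S_j⟦k⟧) ≅ F(S_j)⟦k⟧ coming from the shift compatibility of F) is bijective, then F is fully faithful. -/
open CategoryTheory CategoryTheory.Limits CategoryTheory.Pretriangulated

universe v v' u u' w

section Helpers

variable {T : Type u} {S : Type u'} [Category.{v} T] [Category.{v'} S]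

lemma FF_precomp_bij {X X' Y : T} (e : X' ⟶ X) [IsIso e] :
    Function.Bijective (fun f : X ⟶ Y => e ≫ f) :=
  ⟨fun f g h => by simpa using congrArg (fun p => inv e ≫ p) h,
   fun g => ⟨inv e ≫ g, by simp⟩⟩

lemma FF_bij_of_iso (F : T ⥤ S) {X Y X' Y' : T} (e : X ≅ X') (e' : Y ≅ Y')
    (h : Function.Bijective (fun f : X ⟶ Y => F.map f)) :
    Function.Bijective (fun f : X' ⟶ Y' => F.map f) := by
  have heq : (fun f : X' ⟶ Y' => F.map f) =
      (Iso.homCongr (F.mapIso e) (F.mapIso e')) ∘ (fun g : X ⟶ Y => F.map g) ∘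
        (Iso.homCongr e e').symm := by
    funext f
    simp [Iso.homCongr, ← Functor.map_comp]
  rw [heq]
  exact (Iso.homCongr _ _).bijective.comp (h.comp (Equiv.bijective _))

lemma FF_bij_shift [HasShift T ℤ] [HasShift S ℤ] (F : T ⥤ S) [F.CommShift ℤ] (n : ℤ)
    {X Y : T} (h : Function.Bijective (fun f : X ⟶ Y => F.map f)) :
    Function.Bijective (fun f : X⟦n⟧ ⟶ Y⟦n⟧ => F.map f) := by
  have hnat : ∀ (a : X ⟶ Y), F.map ((shiftFunctor T n).map a) =
      (F.commShiftIso n).hom.app X ≫ (shiftFunctor S n).map (F.map a) ≫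
        (F.commShiftIso n).inv.app Y := by
    intro a
    have hnn := (F.commShiftIso n).hom.naturality a
    dsimp at hnn
    rw [← Category.assoc, ← hnn, Category.assoc]
    simp
  constructor
  · intro a b hab
    obtain ⟨a', rfl⟩ : ∃ a' : X ⟶ Y, a = (shiftFunctor T n).map a' :=
      ⟨(shiftFunctor T n).preimage a, ((shiftFunctor T n).map_preimage a).symm⟩
    obtain ⟨b', rfl⟩ : ∃ b' : X ⟶ Y, b = (shiftFunctor T n).map b' :=
      ⟨(shiftFunctor T n).preimage b, ((shiftFunctor T n).map_preimage b).symm⟩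
    dsimp at hab
    rw [hnat a', hnat b'] at hab
    have h1 : (shiftFunctor S n).map (F.map a') = (shiftFunctor S n).map (F.map b') := by
      have := hab
      rw [cancel_epi ((F.commShiftIso n).hom.app X)] at this
      rw [cancel_mono ((F.commShiftIso n).inv.app Y)] at this
      exact this
    have h2 : F.map a' = F.map b' := (shiftFunctor S n).map_injective h1
    rw [h.injective h2]
  · intro t
    obtain ⟨a, ha⟩ := h.surjective ((shiftFunctor S n).preimage
      ((F.commShiftIso n).inv.app X ≫ t ≫ (F.commShiftIso n).hom.app Y))
    dsimp at ha
    refine ⟨(shiftFunctor T n).map a, ?_⟩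
    dsimp
    rw [hnat a, ha, (shiftFunctor S n).map_preimage]
    simp

end Helpers

/-- Let `F : 𝒯 ⥤ 𝒮` be an exact functor between pretriangulated categories admitting both a
left adjoint and a right adjoint, and let `(S i)` be a spanning class for `𝒯`.  If `F`
induces bijections `Hom(S i, S j⟦k⟧) ≃ Hom(F (S i), F (S j)⟦k⟧)` for all `i, j, k`, then
`F` is fully faithful. -/
theorem fullyFaithful_of_bijective_on_spanning_class
    {T : Type u} {S : Type u'} [Category.{v} T] [Category.{v'} S]
    [Preadditive T] [HasZeroObject T] [HasShift T ℤ]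
    [∀ n : ℤ, (shiftFunctor T n).Additive] [Pretriangulated T]
    [Preadditive S] [HasZeroObject S] [HasShift S ℤ]
    [∀ n : ℤ, (shiftFunctor S n).Additive] [Pretriangulated S]
    (F : T ⥤ S) [F.CommShift ℤ] [F.IsTriangulated]
    (Gl : S ⥤ T) (adjl : Gl ⊣ F) (Gr : S ⥤ T) (adjr : F ⊣ Gr)
    {I : Type w} (Sp : I → T)
    (hspan₁ : ∀ A : T, (∀ (i : I) (j : ℤ) (f : (Sp i)⟦j⟧ ⟶ A), f = 0) → IsZero A)
    (hspan₂ : ∀ A : T, (∀ (i : I) (j : ℤ) (f : A ⟶ (Sp i)⟦j⟧), f = 0) → IsZero A)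
    (hbij : ∀ (i j : I) (m : ℤ),
      Function.Bijective (fun f : Sp i ⟶ (Sp j)⟦m⟧ =>
        F.map f ≫ (F.commShiftIso m).hom.app (Sp j))) :
    F.Full ∧ F.Faithful := by
  classical
  -- Step 0: plain bijectivity on spanning homs
  have hbij' : ∀ (i j : I) (m : ℤ),
      Function.Bijective (fun f : Sp i ⟶ (Sp j)⟦m⟧ => F.map f) := by
    intro i j m
    constructor
    · intro f g h
      have h' : F.map f = F.map g := h
      exact (hbij i j m).injective (by dsimp; rw [h'])
    · intro t
      obtain ⟨f, hf⟩ := (hbij i j m).surjective (t ≫ (F.commShiftIso m).hom.app (Sp j))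
      refine ⟨f, ?_⟩
      dsimp at hf ⊢
      exact (cancel_mono ((F.commShiftIso m).hom.app (Sp j))).1 hf
  -- bijectivity on shifted spanning homs
  have hbijShift : ∀ (i j : I) (k m : ℤ),
      Function.Bijective (fun f : (Sp i)⟦k⟧ ⟶ (Sp j)⟦m⟧ => F.map f) := by
    intro i j k m
    exact FF_bij_of_iso F (Iso.refl _)
      ((shiftFunctorAdd' T (m + -k) k m (by ring)).symm.app (Sp j))
      (FF_bij_shift F k (hbij' i j (m + -k)))
  -- relation between F.map and the counit of the left adjunction
  have counit_id : ∀ (A W : T) (f : A ⟶ W),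
      (adjl.homEquiv (F.obj A) W) (adjl.counit.app A ≫ f) = F.map f := by
    intro A W f
    rw [Adjunction.homEquiv_unit]
    simp
  have precounit : ∀ (A W : T), Function.Bijective (fun f : A ⟶ W => F.map f) →
      Function.Bijective (fun f : A ⟶ W => adjl.counit.app A ≫ f) := by
    intro A W h
    have heq : (fun f : A ⟶ W => adjl.counit.app A ≫ f)
        = (adjl.homEquiv (F.obj A) W).symm ∘ (fun f : A ⟶ W => F.map f) := by
      funext f
      dsimp
      rw [← counit_id A W f, Equiv.symm_apply_apply]
    rw [heq]
    exact (Equiv.bijective _).comp h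
  -- Step 1: counit is iso on objects where F.map is bijective into the spanning class
  have counit_iso : ∀ (A : T), (∀ (j : I) (m : ℤ),
      Function.Bijective (fun f : A ⟶ (Sp j)⟦m⟧ => F.map f)) →
      IsIso (adjl.counit.app A) := by
    intro A hA
    obtain ⟨C, g, hh, hT⟩ := Pretriangulated.distinguished_cocone_triangle (adjl.counit.app A)
    have z12 := comp_distTriang_mor_zero₁₂ _ hT
    have z31 := comp_distTriang_mor_zero₃₁ _ hT
    change adjl.counit.app A ≫ g = 0 at z12
    change hh ≫ (shiftFunctor T 1).map (adjl.counit.app A) = 0 at z31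
    have hzero : ∀ (j : I) (m : ℤ) (f : C ⟶ (Sp j)⟦m⟧), f = 0 := by
      intro j m f
      have h1 : g ≫ f = 0 := by
        apply (precounit A _ (hA j m)).injective
        dsimp
        rw [comp_zero, ← Category.assoc, z12, zero_comp]
      obtain ⟨u, hu⟩ := Pretriangulated.Triangle.yoneda_exact₃ _ hT f h1
      dsimp at u hu
      let adj1 := (shiftEquiv T (1 : ℤ)).toAdjunction
      have hA' : Function.Bijective (fun f : A ⟶ ((Sp j)⟦m⟧)⟦(-1 : ℤ)⟧ => F.map f) :=
        FF_bij_of_iso F (Iso.refl A)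
          ((shiftFunctorAdd' T m (-1) (m + -1) rfl).app (Sp j)) (hA j (m + -1))
      obtain ⟨w, hw⟩ := (precounit A _ hA').surjective (adj1.homEquiv _ _ u)
      dsimp at hw
      have hv : (shiftFunctor T (1 : ℤ)).map (adjl.counit.app A) ≫
          (adj1.homEquiv A _).symm w = u := by
        apply (adj1.homEquiv _ _).injective
        erw [Adjunction.homEquiv_naturality_left]
        simp only [Functor.id_obj]
        erw [Equiv.apply_symm_apply]
        exact hw
      erw [hu, ← hv, ← Category.assoc, z31, zero_comp]; rfl
    have hC : IsZero C := hspan₂ C hzero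
    exact (Pretriangulated.Triangle.isZero₃_iff_isIso₁ _ hT).1 hC
  -- Step 2: F.map is bijective on Hom((Sp i)⟦k⟧, B) for every B
  have step2 : ∀ (i : I) (k : ℤ) (B : T),
      Function.Bijective (fun f : (Sp i)⟦k⟧ ⟶ B => F.map f) := by
    intro i k B
    have hiso : IsIso (adjl.counit.app ((Sp i)⟦k⟧)) :=
      counit_iso _ (fun j m => hbijShift i j k m)
    have heq : (fun f : (Sp i)⟦k⟧ ⟶ B => F.map f)
        = (adjl.homEquiv (F.obj ((Sp i)⟦k⟧)) B) ∘
          (fun f : (Sp i)⟦k⟧ ⟶ B => adjl.counit.app ((Sp i)⟦k⟧) ≫ f) :=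
      funext fun f => (counit_id _ _ f).symm
    rw [heq]
    exact (Equiv.bijective _).comp (FF_precomp_bij _)
  -- relation between F.map and the unit of the right adjunction
  have unit_id : ∀ (X A : T) (f : X ⟶ A),
      adjr.homEquiv X (F.obj A) (F.map f) = f ≫ adjr.unit.app A := by
    intro X A f
    rw [Adjunction.homEquiv_unit]
    simp
  have postunit : ∀ (X A : T), Function.Bijective (fun f : X ⟶ A => F.map f) →
      Function.Bijective (fun f : X ⟶ A => f ≫ adjr.unit.app A) := by
    intro X A h
    have heq : (fun f : X ⟶ A => f ≫ adjr.unit.app A)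
        = (adjr.homEquiv X (F.obj A)) ∘ (fun f : X ⟶ A => F.map f) :=
      funext fun f => (unit_id X A f).symm
    rw [heq]
    exact (Equiv.bijective _).comp h
  -- Step 3: the unit is an isomorphism everywhere
  have unit_iso : ∀ A : T, IsIso (adjr.unit.app A) := by
    intro A
    obtain ⟨D, g, hh, hT⟩ := Pretriangulated.distinguished_cocone_triangle (adjr.unit.app A)
    have z12 := comp_distTriang_mor_zero₁₂ _ hT
    have z31 := comp_distTriang_mor_zero₃₁ _ hT
    change adjr.unit.app A ≫ g = 0 at z12
    change hh ≫ (shiftFunctor T 1).map (adjr.unit.app A) = 0 at z31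
    have hzero : ∀ (i : I) (k : ℤ) (f : (Sp i)⟦k⟧ ⟶ D), f = 0 := by
      intro i k f
      let adj2 := (shiftEquiv' T (-1 : ℤ) (1 : ℤ) (by ring)).toAdjunction
      have hbijsrc : Function.Bijective
          (fun q : ((Sp i)⟦k⟧)⟦(-1 : ℤ)⟧ ⟶ A => F.map q) :=
        FF_bij_of_iso F ((shiftFunctorAdd' T k (-1) (k + -1) rfl).app (Sp i)) (Iso.refl A)
          (step2 i (k + -1) A)
      have h1 : f ≫ hh = 0 := by
        set u := (adj2.homEquiv ((Sp i)⟦k⟧) A).symm (f ≫ hh) with hu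
        have h2 : (adj2.homEquiv ((Sp i)⟦k⟧) ((F ⋙ Gr).obj A))
            (u ≫ adjr.unit.app A) = 0 := by
          erw [Adjunction.homEquiv_naturality_right]
          rw [hu, Equiv.apply_symm_apply]
          show (f ≫ hh) ≫ (shiftFunctor T (1 : ℤ)).map (adjr.unit.app A) = 0
          rw [Category.assoc, z31, comp_zero]
        have h0 : ∀ (v : ((Sp i)⟦k⟧)⟦(-1 : ℤ)⟧ ⟶ ((F ⋙ Gr).obj A)),
            (adj2.homEquiv ((Sp i)⟦k⟧) ((F ⋙ Gr).obj A)) v = 0 → v = 0 := by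
          intro v hv
          apply (adj2.homEquiv _ _).injective
          erw [hv, Adjunction.homEquiv_unit]
          show _ = adj2.unit.app _ ≫ (shiftFunctor T (1 : ℤ)).map (0 : _ ⟶ _)
          simp only [Functor.map_zero]; exact comp_zero.symm
        have h3 : u ≫ adjr.unit.app A = 0 := h0 _ h2
        have h4 : u = 0 := by
          apply (postunit _ A hbijsrc).injective
          show u ≫ adjr.unit.app A = (0 : ((Sp i)⟦k⟧)⟦(-1 : ℤ)⟧ ⟶ A) ≫ adjr.unit.app A
          rw [h3, zero_comp]; rfl
        have h5 : f ≫ hh = (adj2.homEquiv ((Sp i)⟦k⟧) A) u := by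
          rw [hu, Equiv.apply_symm_apply]; rfl
        rw [h5, h4, Adjunction.homEquiv_unit]
        show adj2.unit.app _ ≫ (shiftFunctor T (1 : ℤ)).map (0 : _ ⟶ _) = 0
        simp only [Functor.map_zero]; exact comp_zero
      obtain ⟨w, hw⟩ := Pretriangulated.Triangle.coyoneda_exact₃ _ hT f h1
      dsimp at w hw
      obtain ⟨p, hp⟩ := (postunit ((Sp i)⟦k⟧) A (step2 i k A)).surjective w
      dsimp at hp
      rw [hw, ← hp]; exact (Category.assoc _ _ _).trans ((congrArg (p ≫ ·) z12).trans comp_zero)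
    have hD : IsZero D := hspan₁ D hzero
    exact (Pretriangulated.Triangle.isZero₃_iff_isIso₁ _ hT).1 hD
  haveI : ∀ X, IsIso (adjr.unit.app X) := unit_iso
  haveI : IsIso adjr.unit := NatIso.isIso_of_isIso_app _
  have ff := adjr.fullyFaithfulLOfIsIsoUnit
  exact ⟨ff.full, ff.faithful⟩
end
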